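/- If w ∈ ℝ⁵ is nonzero, then the function r ↦ ξ_r(w) ∈ ℝ² is a nonzero polynomial map; consequently, for any nonzero w, the set {r ∈ [0,1] : ‖ξ_r(w)‖ ≤ b} has Lebesgue measure tending to 0 as b → 0. -/

import Mathlib

open MeasureTheory

/-- The projection ξ_r : ℝ⁵ → ℝ² (Euclidean). -/
noncomputable def xi (r : ℝ) (w : Fin 5 → ℝ) : EuclideanSpace ℝ (Fin 2) :=
  WithLp.toLp 2 ![w 0 + w 1 * r + w 2 * (r ^ 2 / 2) + w 3 * (r ^ 3 / 6) + w 4 * (r ^ 4 / 24),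
    w 1 + w 2 * r + w 3 * (r ^ 2 / 2) + w 4 * (r ^ 3 / 6)]

/-- For nonzero w the map r ↦ ξ_r(w) is not identically zero, and the measure of
{r ∈ [0,1] : ‖ξ_r(w)‖ ≤ b} tends to 0 as b → 0⁺. -/
theorem xi_nonzero_and_sublevel_measure (w : Fin 5 → ℝ) (hw : w ≠ 0) :
    (fun r : ℝ => xi r w) ≠ (fun _ => 0) ∧
    Filter.Tendsto (fun b : ℝ => volume {r ∈ Set.Icc (0 : ℝ) 1 | ‖xi r w‖ ≤ b})
      (nhdsWithin 0 (Set.Ioi 0)) (nhds 0) := by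
  -- component facts
  have hcomp : ∀ r : ℝ, xi r w = 0 ↔
      (w 0 + w 1 * r + w 2 * (r ^ 2 / 2) + w 3 * (r ^ 3 / 6) + w 4 * (r ^ 4 / 24) = 0 ∧
       w 1 + w 2 * r + w 3 * (r ^ 2 / 2) + w 4 * (r ^ 3 / 6) = 0) := by
    intro r
    constructor
    · intro h
      exact ⟨congrArg (fun v => v 0) h, congrArg (fun v => v 1) h⟩
    · rintro ⟨h1, h2⟩
      ext i
      fin_cases i
      · exact h1
      · exact h2
  -- Part 1
  have hne : (fun r : ℝ => xi r w) ≠ (fun _ => 0) := by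
    intro h
    apply hw
    have key : ∀ r : ℝ,
        (w 0 + w 1 * r + w 2 * (r ^ 2 / 2) + w 3 * (r ^ 3 / 6) + w 4 * (r ^ 4 / 24) = 0 ∧
         w 1 + w 2 * r + w 3 * (r ^ 2 / 2) + w 4 * (r ^ 3 / 6) = 0) := by
      intro r
      exact (hcomp r).mp (congrFun h r)
    have k0 := (key 0).2
    have k1 := (key 1).2
    have km1 := (key (-1)).2
    have k2 := (key 2).2
    have p0 := (key 0).1
    have hw1 : w 1 = 0 := by norm_num at k0; linarith
    have hw3 : w 3 = 0 := by norm_num at k1 km1 ⊢; linarith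
    have hw2 : w 2 = 0 := by norm_num at k1 k2 ⊢; linarith
    have hw4 : w 4 = 0 := by norm_num at k1 ⊢; linarith
    have hw0 : w 0 = 0 := by norm_num at p0; linarith
    funext i
    fin_cases i <;> simpa
  refine ⟨hne, ?_⟩
  -- continuity
  have hc : Continuous fun r => xi r w := by
    have : (fun r => xi r w) = fun r => (EuclideanSpace.equiv (Fin 2) ℝ).symm
        ![w 0 + w 1 * r + w 2 * (r ^ 2 / 2) + w 3 * (r ^ 3 / 6) + w 4 * (r ^ 4 / 24),
          w 1 + w 2 * r + w 3 * (r ^ 2 / 2) + w 4 * (r ^ 3 / 6)] := by funext r; rfl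
    rw [this]
    apply (EuclideanSpace.equiv (Fin 2) ℝ).symm.continuous.comp
    apply continuous_pi
    intro i
    fin_cases i <;> simp <;> continuity
  set s : ℝ → Set ℝ := fun b => {r ∈ Set.Icc (0 : ℝ) 1 | ‖xi r w‖ ≤ b} with hs
  have hmeas : ∀ b : ℝ, MeasurableSet (s b) := by
    intro b
    exact measurableSet_Icc.inter (measurableSet_le (hc.norm.measurable) measurable_const)
  -- the intersection is the zero set
  have hInter : (⋂ b > (0:ℝ), s b) = {r ∈ Set.Icc (0 : ℝ) 1 | xi r w = 0} := by
    ext r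
    simp only [Set.mem_iInter, hs, Set.mem_setOf_eq, Set.mem_sep_iff]
    constructor
    · intro h
      have h1 := (h 1 one_pos).1
      refine ⟨h1, ?_⟩
      rw [← norm_le_zero_iff]
      by_contra hpos
      push_neg at hpos
      have := (h (‖xi r w‖ / 2) (by linarith)).2
      linarith
    · rintro ⟨h1, h2⟩ b hb
      exact ⟨h1, by rw [h2]; simp; linarith⟩
  -- zero set has measure zero
  have hzero : volume {r ∈ Set.Icc (0 : ℝ) 1 | xi r w = 0} = 0 := by
    by_cases h1234 : w 1 = 0 ∧ w 2 = 0 ∧ w 3 = 0 ∧ w 4 = 0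
    · obtain ⟨e1, e2, e3, e4⟩ := h1234
      have hw0 : w 0 ≠ 0 := by
        intro e0
        apply hw
        funext i
        fin_cases i <;> simpa
      have : {r ∈ Set.Icc (0 : ℝ) 1 | xi r w = 0} = ∅ := by
        ext r
        simp only [Set.mem_sep_iff, Set.mem_empty_iff_false, iff_false, not_and]
        intro _
        rw [hcomp]
        rintro ⟨hp, -⟩
        rw [e1, e2, e3, e4] at hp
        apply hw0
        linarith
      rw [this]; simp
    · set Q : Polynomial ℝ := Polynomial.C (w 1) + Polynomial.C (w 2) * Polynomial.X +
        Polynomial.C (w 3 / 2) * Polynomial.X ^ 2 + Polynomial.C (w 4 / 6) * Polynomial.X ^ 3 with hQ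
      have hQne : Q ≠ 0 := by
        intro h
        apply h1234
        have c0 := congrArg (Polynomial.coeff · 0) h
        have c1 := congrArg (Polynomial.coeff · 1) h
        have c2 := congrArg (Polynomial.coeff · 2) h
        have c3 := congrArg (Polynomial.coeff · 3) h
        simp [hQ, Polynomial.coeff_add, Polynomial.coeff_C_mul, Polynomial.coeff_X_pow,
          Polynomial.coeff_C] at c0 c1 c2 c3
        refine ⟨c0, c1, by linarith, by linarith⟩
      have hsub : {r ∈ Set.Icc (0 : ℝ) 1 | xi r w = 0} ⊆ {x | Q.IsRoot x} := by
        intro r hr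
        have := ((hcomp r).mp hr.2).2
        simp only [Set.mem_setOf_eq, Polynomial.IsRoot, hQ]
        simp [Polynomial.eval_add, Polynomial.eval_mul]
        nlinarith [this]
      exact measure_mono_null hsub ((Polynomial.finite_setOf_isRoot hQne).measure_zero _)
  -- apply the limit theorem
  have := tendsto_measure_biInter_gt (μ := volume) (s := s) (a := 0)
    (fun b _ => (hmeas b).nullMeasurableSet)
    (fun i j _ hij r hr => ⟨hr.1, hr.2.trans hij⟩)
    ⟨1, one_pos, by
      refine ne_of_lt (lt_of_le_of_lt (measure_mono ?_) (measure_Icc_lt_top (a := (0:ℝ)) (b := 1)))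
      exact fun r hr => hr.1⟩
  rw [hInter, hzero] at this
  exact this
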